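/- Separation of dislocations from distinct profiles: Let $X$ be a reflexive Banach space and $D$ a group of linear isometries satisfying: if $g_k \in D$, $g_k \not\rightharpoonup 0$, $u_k \rightharpoonup 0$, then $g_k u_k \rightharpoonup 0$ on a subsequence. Suppose $u_k$ is bounded, $(g_k^{(1)})^{-1} u_k \rightharpoonup w^{(1)}$, $v_k := u_k - g_k^{(1)} w^{(1)}$, and $(g_k^{(2)})^{-1} v_k \rightharpoonup w^{(2)} \neq 0$ with $g_k^{(1)}, g_k^{(2)} \in D$. Then $(g_k^{(1)})^{-1} g_k^{(2)} \rightharpoonup 0$ (elementwise weakly, on a subsequence). -/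

import Mathlib

open Filter Topology

/-- Weak convergence of a sequence to `0` in a normed space. -/
def WeakNull {X : Type*} [NormedAddCommGroup X] [NormedSpace ℝ X]
    (u : ℕ → X) : Prop :=
  ∀ φ : X →L[ℝ] ℝ, Tendsto (fun k => φ (u k)) atTop (𝓝 0)

/-- Weak convergence of a sequence in a normed space. -/
def WeakConv {X : Type*} [NormedAddCommGroup X] [NormedSpace ℝ X]
    (u : ℕ → X) (w : X) : Prop :=
  ∀ φ : X →L[ℝ] ℝ, Tendsto (fun k => φ (u k)) atTop (𝓝 (φ w))

/-- separation of dislocations from distinct profiles: if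
`(g¹_k)⁻¹ u_k ⇀ w¹`, `v_k = u_k - g¹_k w¹` and `(g²_k)⁻¹ v_k ⇀ w² ≠ 0`, then
`(g¹_k)⁻¹ g²_k ⇀ 0` elementwise on a subsequence. -/
theorem dislocations_separate {X : Type*}
    [NormedAddCommGroup X] [NormedSpace ℝ X] [CompleteSpace X]
    (D : Subgroup (X ≃ₗᵢ[ℝ] X))
    -- reflexivity: bounded sequences have weakly convergent subsequences
    (hrefl : ∀ u : ℕ → X, (∃ C : ℝ, ∀ k, ‖u k‖ ≤ C) →
      ∃ (ψ : ℕ → ℕ) (w : X), StrictMono ψ ∧ WeakConv (fun k => u (ψ k)) w)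
    -- the transfer property (newii)
    (hnewii : ∀ g : ℕ → X ≃ₗᵢ[ℝ] X, (∀ k, g k ∈ D) →
      ¬ (∀ x : X, WeakNull (fun k => g k x)) → ∀ u : ℕ → X, WeakNull u →
        ∃ ψ : ℕ → ℕ, StrictMono ψ ∧ WeakNull (fun k => g (ψ k) (u (ψ k))))
    (u : ℕ → X) (hu_bdd : ∃ C : ℝ, ∀ k, ‖u k‖ ≤ C)
    (g₁ g₂ : ℕ → X ≃ₗᵢ[ℝ] X) (hg₁ : ∀ k, g₁ k ∈ D) (hg₂ : ∀ k, g₂ k ∈ D)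
    (w₁ w₂ : X) (hw₂ : w₂ ≠ 0)
    (hconv₁ : WeakConv (fun k => (g₁ k)⁻¹ (u k)) w₁)
    (hconv₂ : WeakConv (fun k => (g₂ k)⁻¹ (u k - g₁ k w₁)) w₂) :
    ∃ ψ : ℕ → ℕ, StrictMono ψ ∧
      ∀ x : X, WeakNull (fun k => ((g₁ (ψ k))⁻¹ * g₂ (ψ k)) x) := by

  classical
  -- nonzero vector has a functional not vanishing on it
  have hsep : ∀ z : X, z ≠ 0 → ∃ φ : X →L[ℝ] ℝ, φ z ≠ 0 := by
    intro z hz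
    obtain ⟨φ, _, hφ⟩ := exists_dual_vector ℝ z (norm_ne_zero_iff.mpr hz)
    exact ⟨φ, by simp [hφ, norm_ne_zero_iff, hz]⟩
  have hconstnull : ∀ z : X, WeakNull (fun _ : ℕ => z) → z = 0 := by
    intro z hz
    by_contra h
    obtain ⟨φ, hφ⟩ := hsep z h
    exact hφ (tendsto_nhds_unique tendsto_const_nhds (hz φ))
  set v : ℕ → X := fun k => u k - g₁ k w₁ with hv
  -- (g₁ k)⁻¹ v k ⇀ 0
  have hvnull : WeakNull (fun k => (g₁ k)⁻¹ (v k)) := by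
    intro φ
    have h1 := (hconv₁ φ).sub (tendsto_const_nhds (x := φ w₁))
    simp only [sub_self] at h1
    convert h1 using 2 with k
    simp [hv, map_sub]
  -- Step A: (g₂ k)⁻¹ * g₁ k ⇀ 0 elementwise
  have hstepA : ∀ x : X, WeakNull (fun k => ((g₂ k)⁻¹ * g₁ k) x) := by
    by_contra hA
    obtain ⟨ψ, hψ, hnull⟩ := hnewii (fun k => (g₂ k)⁻¹ * g₁ k)
      (fun k => mul_mem (inv_mem (hg₂ k)) (hg₁ k)) hA
      (fun k => (g₁ k)⁻¹ (v k)) hvnull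
    have heq : (fun k => ((g₂ (ψ k))⁻¹ * g₁ (ψ k)) ((g₁ (ψ k))⁻¹ (v (ψ k))))
        = fun k => (g₂ (ψ k))⁻¹ (v (ψ k)) := by
      funext k
      simp [LinearIsometryEquiv.coe_mul]
    rw [heq] at hnull
    -- but (g₂ (ψ k))⁻¹ (v (ψ k)) ⇀ w₂, so w₂ = 0
    apply hw₂
    by_contra h
    obtain ⟨φ, hφ⟩ := hsep w₂ h
    have h2 : Tendsto (fun k => φ ((g₂ (ψ k))⁻¹ (v (ψ k)))) atTop (𝓝 (φ w₂)) :=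
      (hconv₂ φ).comp hψ.tendsto_atTop
    exact hφ (tendsto_nhds_unique h2 (hnull φ))
  -- Step B: (g₁ k)⁻¹ * g₂ k ⇀ 0 elementwise
  refine ⟨id, strictMono_id, ?_⟩
  by_contra hB
  obtain ⟨ψ, hψ, hnull⟩ := hnewii (fun k => (g₁ k)⁻¹ * g₂ k)
    (fun k => mul_mem (inv_mem (hg₁ k)) (hg₂ k)) hB
    (fun k => ((g₂ k)⁻¹ * g₁ k) w₂) (hstepA w₂)
  have heq : (fun k => ((g₁ (ψ k))⁻¹ * g₂ (ψ k)) (((g₂ (ψ k))⁻¹ * g₁ (ψ k)) w₂))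
      = fun _ => w₂ := by
    funext k
    simp [LinearIsometryEquiv.coe_mul]
  rw [heq] at hnull
  exact hw₂ (hconstnull w₂ hnull)
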